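/- Clifford's theorem for graphs: if G is a finite connected loopless weightless graph of genus g and d is a divisor of degree d₀ with 0 ≤ d₀ ≤ 2g − 2 and r_G(d) ≥ 0, then r_G(d) ≤ d₀/2. -/

import Mathlib

open Finset

/-- The order of the rational function `f` at the vertex `v`, for the graph with
edge multiplicities `m`:  `ord_v(f) = ∑_{w ≠ v} (f(v) - f(w))·(v·w)`. -/
def ordAt {V : Type*} [Fintype V] (m : V → V → ℕ) (f : V → ℤ) (v : V) : ℤ :=
  ∑ w, (f v - f w) * (m v w : ℤ)

/-- The divisor of the rational function `f`. -/
def divOf {V : Type*} [Fintype V] (m : V → V → ℕ) (f : V → ℤ) : V → ℤ :=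
  fun v => ordAt m f v

/-- The degree of a divisor. -/
def degOf {V : Type*} [Fintype V] (d : V → ℤ) : ℤ := ∑ v, d v

/-- A divisor is principal if it is the divisor of some rational function. -/
def IsPrincipal {V : Type*} [Fintype V] (m : V → V → ℕ) (d : V → ℤ) : Prop :=
  ∃ f : V → ℤ, d = divOf m f

/-- Linear equivalence of divisors. -/
def LinEquiv {V : Type*} [Fintype V] (m : V → V → ℕ) (d d' : V → ℤ) : Prop :=
  IsPrincipal m (d - d')

/-- `rankGE m d k` : every effective divisor of degree `k` is dominated by some
divisor linearly equivalent to `d`. -/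
def rankGE {V : Type*} [Fintype V] (m : V → V → ℕ) (d : V → ℤ) (k : ℕ) : Prop :=
  ∀ e : V → ℤ, (∀ v, 0 ≤ e v) → degOf e = (k : ℤ) →
    ∃ d' : V → ℤ, LinEquiv m d d' ∧ ∀ v, e v ≤ d' v

/-- The Baker–Norine combinatorial rank of a divisor: the largest `k ≥ 0` such that
every effective divisor of degree `k` is dominated by a divisor equivalent to `d`,
and `-1` if there is no such `k`. -/
noncomputable def bnRank {V : Type*} [Fintype V] (m : V → V → ℕ) (d : V → ℤ) : ℤ :=
  sSup ({-1} ∪ {k : ℤ | 0 ≤ k ∧ rankGE m d k.toNat})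

/-- Connectivity of the (multi)graph with edge multiplicities `m`. -/
def Conn {V : Type*} [Fintype V] (m : V → V → ℕ) : Prop :=
  ∀ u v : V, Relation.ReflTransGen (fun a b => 0 < m a b) u v

set_option linter.unusedSectionVars false
set_option linter.unusedVariables false
set_option linter.unnecessarySimpa false

section Basics
variable {V : Type*} [Fintype V] [DecidableEq V] (m : V → V → ℕ)

lemma divOf_apply (f : V → ℤ) (v : V) :
    divOf m f v = ∑ w, (f v - f w) * (m v w : ℤ) := rfl

lemma divOf_add (f g : V → ℤ) : divOf m (f + g) = divOf m f + divOf m g := by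
  funext v
  simp only [divOf, ordAt, Pi.add_apply]
  rw [← Finset.sum_add_distrib]
  congr 1; funext w; ring

lemma divOf_neg (f : V → ℤ) : divOf m (-f) = -(divOf m f) := by
  funext v
  simp only [divOf, ordAt, Pi.neg_apply, ← Finset.sum_neg_distrib]
  congr 1; funext w; ring

lemma divOf_zero : divOf m (0 : V → ℤ) = 0 := by
  funext v; simp [divOf, ordAt]

lemma linEquiv_refl (d : V → ℤ) : LinEquiv m d d := by
  refine ⟨0, ?_⟩; rw [divOf_zero]; simp

lemma linEquiv_symm {d d' : V → ℤ} (h : LinEquiv m d d') : LinEquiv m d' d := by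
  obtain ⟨f, hf⟩ := h
  exact ⟨-f, by rw [divOf_neg, ← hf]; abel⟩

lemma linEquiv_trans {d d' d'' : V → ℤ} (h : LinEquiv m d d') (h' : LinEquiv m d' d'') :
    LinEquiv m d d'' := by
  obtain ⟨f, hf⟩ := h; obtain ⟨g, hg⟩ := h'
  exact ⟨f + g, by rw [divOf_add, ← hf, ← hg]; abel⟩

lemma sum_pair_cancel (hsymm : ∀ v w, m v w = m w v) (A : Finset V) (f : V → ℤ) :
    ∑ v ∈ A, ∑ w ∈ A, (f v - f w) * (m v w : ℤ) = 0 := by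
  have h1 : ∑ v ∈ A, ∑ w ∈ A, (f v - f w) * (m v w : ℤ)
      = (∑ v ∈ A, ∑ w ∈ A, f v * (m v w : ℤ)) - ∑ v ∈ A, ∑ w ∈ A, f w * (m v w : ℤ) := by
    rw [← Finset.sum_sub_distrib]
    congr 1; funext v
    rw [← Finset.sum_sub_distrib]
    congr 1; funext w; ring
  have h2 : ∑ v ∈ A, ∑ w ∈ A, f w * (m v w : ℤ) = ∑ v ∈ A, ∑ w ∈ A, f v * (m v w : ℤ) := by
    rw [Finset.sum_comm]
    congr 1; funext v
    congr 1; funext w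
    rw [hsymm]
  rw [h1, h2, sub_self]

lemma cut_sum (hsymm : ∀ v w, m v w = m w v) (A : Finset V) (f : V → ℤ) :
    ∑ v ∈ A, divOf m f v = ∑ v ∈ A, ∑ w ∈ Aᶜ, (f v - f w) * (m v w : ℤ) := by
  classical
  have : ∀ v ∈ A, divOf m f v
      = (∑ w ∈ A, (f v - f w) * (m v w : ℤ)) + ∑ w ∈ Aᶜ, (f v - f w) * (m v w : ℤ) := by
    intro v _
    rw [divOf_apply, ← Finset.sum_add_sum_compl A]
  rw [Finset.sum_congr rfl this, Finset.sum_add_distrib, sum_pair_cancel m hsymm, zero_add]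

lemma deg_divOf (hsymm : ∀ v w, m v w = m w v) (f : V → ℤ) : degOf (divOf m f) = 0 := by
  classical
  have := cut_sum m hsymm univ f
  simpa [degOf, Finset.compl_univ] using this

lemma deg_eq_of_linEquiv (hsymm : ∀ v w, m v w = m w v) {d d' : V → ℤ}
    (h : LinEquiv m d d') : degOf d = degOf d' := by
  obtain ⟨f, hf⟩ := h
  have h1 : degOf (d - d') = 0 := by rw [hf]; exact deg_divOf m hsymm f
  have : degOf (d - d') = degOf d - degOf d' := by
    simp [degOf, Finset.sum_sub_distrib]
  omega

end Basics

section Rank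
variable {V : Type*} [Fintype V] [DecidableEq V] (m : V → V → ℕ)

lemma deg_nonneg_of_eff {e : V → ℤ} (he : ∀ v, 0 ≤ e v) : 0 ≤ degOf e :=
  Finset.sum_nonneg fun v _ => he v

lemma deg_single (q : V) (c : ℤ) : degOf (fun v => if v = q then c else 0) = c := by
  simp [degOf]

lemma rankGE_congr {d₁ d₂ : V → ℤ} (h : LinEquiv m d₁ d₂) {k : ℕ} (hk : rankGE m d₁ k) :
    rankGE m d₂ k := by
  intro e he hdeg
  obtain ⟨d', hd', hdom⟩ := hk e he hdeg
  exact ⟨d', linEquiv_trans m (linEquiv_symm m h) hd', hdom⟩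

lemma rankGE_mono (q : V) {d : V → ℤ} {k j : ℕ} (h : rankGE m d k) (hjk : j ≤ k) :
    rankGE m d j := by
  intro e he hdeg
  set e' : V → ℤ := fun v => e v + (if v = q then ((k : ℤ) - j) else 0) with he'
  have heff : ∀ v, 0 ≤ e' v := by
    intro v; simp only [he']
    have := he v
    split <;> [skip; simp [this]]
    · have : (j : ℤ) ≤ (k : ℤ) := by exact_mod_cast hjk
      linarith [he v]
  have hdeg' : degOf e' = (k : ℤ) := by
    simp only [he', degOf, Finset.sum_add_distrib]
    rw [← degOf, hdeg, ← degOf, deg_single]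
    ring
  obtain ⟨d', hd', hdom⟩ := h e' heff hdeg'
  refine ⟨d', hd', fun v => le_trans ?_ (hdom v)⟩
  simp only [he']
  have : (j : ℤ) ≤ (k : ℤ) := by exact_mod_cast hjk
  split <;> linarith

lemma rankGE_le_deg (hsymm : ∀ v w, m v w = m w v) (q : V) {d : V → ℤ} {k : ℕ}
    (h : rankGE m d k) : (k : ℤ) ≤ degOf d := by
  obtain ⟨d', hd', hdom⟩ := h (fun v => if v = q then (k : ℤ) else 0)
    (fun v => by by_cases h : v = q <;> simp [h]) (deg_single q k)
  have h1 : (k : ℤ) ≤ degOf d' := by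
    rw [← deg_single q (k : ℤ)]
    exact Finset.sum_le_sum fun v _ => hdom v
  rw [deg_eq_of_linEquiv m hsymm hd']
  exact h1

lemma eff_split (a : ℕ) : ∀ (b : ℕ) (e : V → ℤ), (∀ v, 0 ≤ e v) → degOf e = (a : ℤ) + b →
    ∃ e₁ e₂ : V → ℤ, (∀ v, 0 ≤ e₁ v) ∧ (∀ v, 0 ≤ e₂ v) ∧ degOf e₁ = a ∧ degOf e₂ = b ∧
      e = e₁ + e₂ := by
  intro b
  induction b with
  | zero => intro e he hdeg; exact ⟨e, 0, he, fun v => le_refl 0, by simpa using hdeg, by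
      simp [degOf], by simp⟩
  | succ b ih =>
    intro e he hdeg
    have hpos : ∃ v, 1 ≤ e v := by
      by_contra hc
      push_neg at hc
      have : degOf e ≤ 0 := Finset.sum_nonpos fun v _ => by have := hc v; have := he v; omega
      rw [hdeg] at this
      omega
    obtain ⟨v₀, hv₀⟩ := hpos
    set ee : V → ℤ := fun v => e v - (if v = v₀ then 1 else 0) with hee
    have heff : ∀ v, 0 ≤ ee v := by
      intro v; simp only [hee]; have := he v; split
      · subst ‹v = v₀›; omega
      · omega
    have hdeg' : degOf ee = (a : ℤ) + b := by
      simp only [hee, degOf, Finset.sum_sub_distrib]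
      rw [← degOf, hdeg, ← degOf, deg_single]
      push_cast; ring
    obtain ⟨e₁, e₂, h1, h2, h3, h4, h5⟩ := ih ee heff hdeg'
    refine ⟨e₁, fun v => e₂ v + (if v = v₀ then 1 else 0), h1, fun v => by
      by_cases hv : v = v₀
      · subst hv; simp only [if_pos rfl, if_true]; linarith [h2 v]
      · simp only [if_neg hv, add_zero]; exact h2 v, h3, ?_, ?_⟩
    · simp only [degOf, Finset.sum_add_distrib]
      rw [← degOf, h4, ← degOf, deg_single]
      push_cast; ring
    · funext v
      have : e v = ee v + (if v = v₀ then 1 else 0) := by simp [hee]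
      rw [this, congrFun h5 v]
      simp only [Pi.add_apply]; ring

lemma linEquiv_add {d₁ d₂ c₁ c₂ : V → ℤ} (h₁ : LinEquiv m d₁ c₁) (h₂ : LinEquiv m d₂ c₂) :
    LinEquiv m (d₁ + d₂) (c₁ + c₂) := by
  obtain ⟨f, hf⟩ := h₁; obtain ⟨g, hg⟩ := h₂
  refine ⟨f + g, ?_⟩
  rw [divOf_add, ← hf, ← hg]; abel

lemma rankGE_subadd {d₁ d₂ : V → ℤ} {a b : ℕ} (h₁ : rankGE m d₁ a) (h₂ : rankGE m d₂ b) :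
    rankGE m (d₁ + d₂) (a + b) := by
  intro e he hdeg
  obtain ⟨e₁, e₂, he₁, he₂, hd₁, hd₂, hsplit⟩ := eff_split a b e he (by push_cast at hdeg ⊢; linarith)
  obtain ⟨c₁, hc₁, hdom₁⟩ := h₁ e₁ he₁ hd₁
  obtain ⟨c₂, hc₂, hdom₂⟩ := h₂ e₂ he₂ hd₂
  refine ⟨c₁ + c₂, linEquiv_add m hc₁ hc₂, fun v => ?_⟩
  rw [congrFun hsplit v]
  exact add_le_add (hdom₁ v) (hdom₂ v)

lemma rankGE_extract {X E : V → ℤ} {k : ℕ} (hE : ∀ v, 0 ≤ E v) (hdegE : degOf E = (k : ℤ))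
    (h : rankGE m (X + E) k) : ∃ X', LinEquiv m X X' ∧ ∀ v, 0 ≤ X' v := by
  obtain ⟨Y, hY, hdom⟩ := h E hE hdegE
  refine ⟨Y - E, ?_, fun v => by simp only [Pi.sub_apply]; linarith [hdom v]⟩
  obtain ⟨f, hf⟩ := hY
  refine ⟨f, ?_⟩
  rw [← hf]; abel

lemma rankGE_zero_iff {d : V → ℤ} :
    rankGE m d 0 ↔ ∃ d', LinEquiv m d d' ∧ ∀ v, 0 ≤ d' v := by
  constructor
  · intro h
    obtain ⟨d', hd', hdom⟩ := h 0 (fun v => le_refl 0) (by simp [degOf])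
    exact ⟨d', hd', fun v => hdom v⟩
  · rintro ⟨d', hd', heff⟩ e he hdeg
    have : ∀ v, e v = 0 := by
      intro v
      have h1 : ∑ v, e v = 0 := hdeg
      have := (Finset.sum_eq_zero_iff_of_nonneg (fun v _ => he v)).1 h1 v (Finset.mem_univ v)
      exact this
    exact ⟨d', hd', fun v => by rw [this v]; exact heff v⟩

end Rank

section BnRank
variable {V : Type*} [Fintype V] [DecidableEq V] (m : V → V → ℕ)

def rankSet (d : V → ℤ) : Set ℤ := {-1} ∪ {k : ℤ | 0 ≤ k ∧ rankGE m d k.toNat}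

lemma bnRank_eq (d : V → ℤ) : bnRank m d = sSup (rankSet m d) := rfl

lemma rankSet_nonempty (d : V → ℤ) : (rankSet m d).Nonempty :=
  ⟨-1, Or.inl rfl⟩

lemma rankSet_bddAbove (hsymm : ∀ v w, m v w = m w v) (q : V) (d : V → ℤ) :
    BddAbove (rankSet m d) := by
  refine ⟨max (degOf d) (-1), ?_⟩
  rintro k (hk | ⟨hk0, hk⟩)
  · simp only [Set.mem_singleton_iff] at hk
    subst hk; exact le_max_right _ _
  · have := rankGE_le_deg m hsymm q hk
    rw [Int.toNat_of_nonneg hk0] at this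
    exact le_trans this (le_max_left _ _)

lemma neg_one_le_bnRank (hsymm : ∀ v w, m v w = m w v) (q : V) (d : V → ℤ) :
    -1 ≤ bnRank m d :=
  le_csSup (rankSet_bddAbove m hsymm q d) (Or.inl rfl)

lemma le_bnRank_of_rankGE (hsymm : ∀ v w, m v w = m w v) (q : V) {d : V → ℤ} {k : ℕ}
    (h : rankGE m d k) : (k : ℤ) ≤ bnRank m d := by
  refine le_csSup (rankSet_bddAbove m hsymm q d) (Or.inr ⟨Int.natCast_nonneg k, ?_⟩)
  simpa using h

lemma bnRank_mem (hsymm : ∀ v w, m v w = m w v) (q : V) (d : V → ℤ) :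
    bnRank m d ∈ rankSet m d := by
  classical
  obtain ⟨b, hb⟩ := rankSet_bddAbove m hsymm q d
  obtain ⟨lub, hmem, hlub⟩ := Int.exists_greatest_of_bdd (P := fun z => z ∈ rankSet m d)
    ⟨b, fun z hz => hb hz⟩ ⟨-1, Or.inl rfl⟩
  have : bnRank m d = lub := by
    rw [bnRank_eq]
    exact IsGreatest.csSup_eq ⟨hmem, fun z hz => hlub z hz⟩
  rw [this]; exact hmem

lemma rankGE_of_le_bnRank (hsymm : ∀ v w, m v w = m w v) (q : V) {d : V → ℤ} {k : ℕ}
    (h : (k : ℤ) ≤ bnRank m d) : rankGE m d k := by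
  rcases bnRank_mem m hsymm q d with hm | ⟨h0, hrk⟩
  · simp only [Set.mem_singleton_iff] at hm
    rw [hm] at h
    omega
  · refine rankGE_mono m q hrk ?_
    have : (k : ℤ) ≤ ((bnRank m d).toNat : ℤ) := by
      rw [Int.toNat_of_nonneg h0]; exact h
    exact_mod_cast this

lemma bnRank_le_deg (hsymm : ∀ v w, m v w = m w v) (q : V) (d : V → ℤ)
    (hd : 0 ≤ degOf d) : bnRank m d ≤ degOf d := by
  rcases bnRank_mem m hsymm q d with hm | ⟨h0, hrk⟩
  · simp only [Set.mem_singleton_iff] at hm; omega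
  · have := rankGE_le_deg m hsymm q hrk
    rwa [Int.toNat_of_nonneg h0] at this

end BnRank

section Reduced
variable {V : Type*} [Fintype V] [DecidableEq V] (m : V → V → ℕ)

/-- `q`-reduced divisor. -/
def Red (q : V) (D : V → ℤ) : Prop :=
  (∀ v, v ≠ q → 0 ≤ D v) ∧
  ∀ A : Finset V, A.Nonempty → q ∉ A → ∃ v ∈ A, D v < ∑ w ∈ Aᶜ, (m v w : ℤ)

lemma red_q_nonneg (hsymm : ∀ v w, m v w = m w v) (q : V) {D E : V → ℤ}
    (hred : Red m q D) (hDE : LinEquiv m D E) (hE : ∀ v, 0 ≤ E v) : 0 ≤ D q := by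
  obtain ⟨f, hf⟩ := hDE
  have hDv : ∀ v, D v = E v + divOf m f v := by
    intro v
    have := congrFun hf v
    simp only [Pi.sub_apply] at this
    linarith
  obtain ⟨b, -, hb⟩ := Finset.exists_max_image univ f ⟨q, Finset.mem_univ q⟩
  set A : Finset V := univ.filter (fun v => f b ≤ f v) with hA
  have hbA : b ∈ A := by simp [hA]
  by_cases hq : q ∈ A
  · have h1 : f b ≤ f q := by simpa [hA] using hq
    have h2 : 0 ≤ divOf m f q := by
      rw [divOf_apply]
      refine Finset.sum_nonneg fun w _ => ?_
      have := hb w (Finset.mem_univ w)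
      have hm : (0:ℤ) ≤ m q w := Int.natCast_nonneg _
      nlinarith
    rw [hDv q]; linarith [hE q]
  · obtain ⟨v, hvA, hv⟩ := hred.2 A ⟨b, hbA⟩ hq
    have hfv : f b ≤ f v := by simpa [hA] using hvA
    have h2 : ∑ w ∈ Aᶜ, (m v w : ℤ) ≤ divOf m f v := by
      rw [divOf_apply, ← Finset.sum_add_sum_compl A]
      have hinA : ∀ w ∈ A, (0:ℤ) ≤ (f v - f w) * m v w := by
        intro w hw
        have h3 : f b ≤ f w := by simpa [hA] using hw
        have h4 := hb w (Finset.mem_univ w)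
        have h5 := hb v (Finset.mem_univ v)
        have hm : (0:ℤ) ≤ m v w := Int.natCast_nonneg _
        nlinarith
      have hout : ∀ w ∈ Aᶜ, (m v w : ℤ) ≤ (f v - f w) * m v w := by
        intro w hw
        have h3 : ¬ (f b ≤ f w) := by simpa [hA] using (Finset.mem_compl.1 hw)
        have hm : (0:ℤ) ≤ m v w := Int.natCast_nonneg _
        nlinarith
      calc ∑ w ∈ Aᶜ, (m v w : ℤ) ≤ ∑ w ∈ Aᶜ, (f v - f w) * m v w :=
            Finset.sum_le_sum hout
        _ ≤ (∑ w ∈ A, (f v - f w) * m v w) + ∑ w ∈ Aᶜ, (f v - f w) * m v w := by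
            have := Finset.sum_nonneg hinA
            linarith
    rw [hDv v] at hv
    linarith [hE v]

lemma exists_cross {q : V} (A : Finset V) (hq : q ∉ A) :
    ∀ {a : V}, Relation.ReflTransGen (fun x y => 0 < m x y) q a → a ∈ A →
      ∃ v ∈ A, ∃ w, w ∉ A ∧ 0 < m w v := by
  intro a h
  induction h with
  | refl => exact fun ha => absurd ha hq
  | @tail b c hqb hbc ih =>
    intro hc
    by_cases hbA : b ∈ A
    · exact ih hbA
    · exact ⟨c, hc, b, hbA, hbc⟩

/-- BFS layers from `q`. -/
def layer (q : V) : ℕ → Finset V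
  | 0 => {q}
  | (k+1) => layer q k ∪ univ.filter (fun v => ∃ w ∈ layer q k, 0 < m w v)

lemma layer_subset_succ (q : V) (k : ℕ) : layer m q k ⊆ layer m q (k+1) :=
  Finset.subset_union_left

lemma layer_mono (q : V) {j k : ℕ} (h : j ≤ k) : layer m q j ⊆ layer m q k := by
  induction k with
  | zero => simpa [Nat.le_zero.1 h]
  | succ k ih =>
    rcases Nat.lt_or_ge j (k+1) with h' | h'
    · exact (ih (Nat.lt_succ_iff.1 h')).trans (layer_subset_succ m q k)
    · have : j = k + 1 := le_antisymm h h'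
      simp [this]

lemma q_mem_layer (q : V) (k : ℕ) : q ∈ layer m q k :=
  layer_mono m q (Nat.zero_le k) (by simp [layer])

lemma layer_grow (hconn : Conn m) (q : V) (k : ℕ) :
    layer m q k = univ ∨ (k+1 : ℕ) ≤ (layer m q k).card := by
  induction k with
  | zero =>
      right; simp [layer]
  | succ k ih =>
    rcases ih with h | h
    · left
      refine Finset.eq_univ_of_forall fun v => ?_
      exact layer_subset_succ m q k (h ▸ Finset.mem_univ v)
    · by_cases hu : layer m q k = univ
      · left
        refine Finset.eq_univ_of_forall fun v => ?_
        exact layer_subset_succ m q k (hu ▸ Finset.mem_univ v)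
      · right
        -- find a vertex in layer (k+1) not in layer k
        have hne : ((layer m q k)ᶜ : Finset V).Nonempty := by
          rw [← Finset.card_pos, Finset.card_compl]
          have := Finset.card_lt_card (Finset.ssubset_univ_iff.2 hu)
          simp only [Finset.card_univ] at this
          omega
        obtain ⟨a, ha⟩ := hne
        have haA : a ∉ layer m q k := Finset.mem_compl.1 ha
        obtain ⟨v, hvA, w, hw, hmwv⟩ := exists_cross m (A := (layer m q k)ᶜ)
          (by simp [q_mem_layer]) (hconn q a) ha
        have hvk : v ∉ layer m q k := Finset.mem_compl.1 hvA
        have hwk : w ∈ layer m q k := by simpa using hw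
        have hvk1 : v ∈ layer m q (k+1) := by
          simp only [layer, Finset.mem_union, Finset.mem_filter, Finset.mem_univ, true_and]
          exact Or.inr ⟨w, hwk, hmwv⟩
        have hss : layer m q k ⊂ layer m q (k+1) :=
          ⟨layer_subset_succ m q k, fun hsub => hvk (hsub hvk1)⟩
        have := Finset.card_lt_card hss
        omega

lemma layer_top (hconn : Conn m) (q : V) :
    layer m q (Fintype.card V - 1) = univ := by
  rcases layer_grow m hconn q (Fintype.card V - 1) with h | h
  · exact h
  · have hn : 1 ≤ Fintype.card V := Fintype.card_pos_iff.2 ⟨q⟩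
    have hle := Finset.card_le_univ (layer m q (Fintype.card V - 1))
    exact Finset.eq_univ_of_card _ (by omega)

/-- depth of a vertex: BFS distance from `q`. -/
def dep (hconn : Conn m) (q : V) (v : V) : ℕ :=
  Nat.find (show ∃ k, v ∈ layer m q k from
    ⟨Fintype.card V - 1, by rw [layer_top m hconn q]; exact Finset.mem_univ v⟩)

lemma mem_layer_dep (hconn : Conn m) (q v : V) : v ∈ layer m q (dep m hconn q v) := by
  have := Nat.find_spec (show ∃ k, v ∈ layer m q k from
    ⟨Fintype.card V - 1, by rw [layer_top m hconn q]; exact Finset.mem_univ v⟩)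
  exact this

lemma dep_min (hconn : Conn m) {q v : V} {k : ℕ} (h : v ∈ layer m q k) :
    dep m hconn q v ≤ k := by
  exact Nat.find_min' (show ∃ k, v ∈ layer m q k from
    ⟨Fintype.card V - 1, by rw [layer_top m hconn q]; exact Finset.mem_univ v⟩) h

lemma dep_le_card (hconn : Conn m) (q v : V) : dep m hconn q v ≤ Fintype.card V - 1 :=
  dep_min m hconn (by rw [layer_top m hconn q]; exact Finset.mem_univ v)

lemma dep_eq_zero (hconn : Conn m) {q v : V} (h : dep m hconn q v = 0) : v = q := by
  have := mem_layer_dep m hconn q v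
  rw [h] at this
  simpa [layer] using this

lemma dep_adj (hconn : Conn m) {q v w : V} (h : 0 < m w v) :
    dep m hconn q v ≤ dep m hconn q w + 1 := by
  refine dep_min m hconn ?_
  simp only [layer, Finset.mem_union, Finset.mem_filter, Finset.mem_univ, true_and]
  exact Or.inr ⟨w, mem_layer_dep m hconn q w, h⟩

lemma dep_pred (hconn : Conn m) {q v : V} (hv : v ≠ q) :
    ∃ w, 0 < m w v ∧ dep m hconn q w < dep m hconn q v := by
  have hk : dep m hconn q v ≠ 0 := fun h => hv (dep_eq_zero m hconn h)
  obtain ⟨k, hk'⟩ : ∃ k, dep m hconn q v = k + 1 := ⟨dep m hconn q v - 1, by omega⟩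
  have hmem : v ∈ layer m q (k+1) := by rw [← hk']; exact mem_layer_dep m hconn q v
  have hnot : v ∉ layer m q k := by
    intro hmem'
    have := dep_min m hconn hmem'
    omega
  simp only [layer, Finset.mem_union, Finset.mem_filter, Finset.mem_univ, true_and] at hmem
  rcases hmem with h | ⟨w, hw, hmwv⟩
  · exact absurd h hnot
  · exact ⟨w, hmwv, by have := dep_min m hconn hw; omega⟩

end Reduced

section F0
variable {V : Type*} [Fintype V] [DecidableEq V] (m : V → V → ℕ)

lemma exists_F0 (hsymm : ∀ v w, m v w = m w v) (hconn : Conn m) (q : V) (D : V → ℤ) :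
    ∃ f : V → ℤ, ∀ v, v ≠ q → divOf m f v ≤ D v := by
  set n : ℕ := Fintype.card V with hn
  set Ee : ℤ := ∑ v, ∑ w, (m v w : ℤ) with hEe
  set Cc : ℤ := 1 + ∑ v, |D v| with hCc
  have hEe0 : 0 ≤ Ee := Finset.sum_nonneg fun v _ =>
    Finset.sum_nonneg fun w _ => Int.natCast_nonneg _
  have hCc1 : 1 ≤ Cc := by
    have : 0 ≤ ∑ v, |D v| := Finset.sum_nonneg fun v _ => abs_nonneg _
    omega
  have hDlb : ∀ v, -(Cc - 1) ≤ D v := by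
    intro v
    have h1 : |D v| ≤ ∑ u, |D u| :=
      Finset.single_le_sum (fun u _ => abs_nonneg (D u)) (Finset.mem_univ v)
    have := neg_abs_le (D v)
    omega
  have hrow : ∀ v, ∑ w, (m v w : ℤ) ≤ Ee :=
    fun v => Finset.single_le_sum
      (fun u _ => Finset.sum_nonneg fun w _ => Int.natCast_nonneg _) (Finset.mem_univ v)
  set a : ℕ → ℤ := fun i => Cc * (Ee + 1)^(n - i) with ha
  set b : ℕ → ℤ := fun k => ∑ i ∈ Finset.range k, a (i+1) with hb
  have ha0 : ∀ i, 0 ≤ a i := fun i =>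
    mul_nonneg (by omega) (pow_nonneg (by omega) _)
  have hbsucc : ∀ k, b (k+1) = b k + a (k+1) := fun k => Finset.sum_range_succ _ k
  have hbmono : ∀ {j k : ℕ}, j ≤ k → b j ≤ b k := by
    intro j k hjk
    refine Finset.sum_le_sum_of_subset_of_nonneg (Finset.range_subset_range.2 hjk)
      fun i _ _ => ha0 (i+1)
  have hkey : ∀ k, 1 ≤ k → k + 1 ≤ n → Cc ≤ a k - Ee * a (k+1) := by
    intro k h1 h2
    have hnk : n - k = (n - (k+1)) + 1 := by omega
    have : a k = Cc * (Ee+1)^(n - (k+1)) * (Ee + 1) := by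
      rw [ha]
      simp only []
      rw [hnk, pow_succ]
      ring
    have h3 : a k - Ee * a (k+1) = Cc * (Ee+1)^(n - (k+1)) := by
      rw [this, ha]
      simp only []
      ring
    rw [h3]
    have hp : (1:ℤ) ≤ (Ee+1)^(n - (k+1)) := one_le_pow₀ (by omega)
    nlinarith
  refine ⟨fun v => -(b (dep m hconn q v)), fun v hv => ?_⟩
  set k : ℕ := dep m hconn q v with hk
  have hk1 : 1 ≤ k := by
    rcases Nat.eq_zero_or_pos k with h | h
    · exact absurd (dep_eq_zero m hconn (hk ▸ h)) hv
    · exact h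
  have hkn : k + 1 ≤ n := by
    have := dep_le_card m hconn q v
    have hnpos : 1 ≤ n := Fintype.card_pos_iff.2 ⟨q⟩
    omega
  obtain ⟨w₀, hw₀m, hw₀d⟩ := dep_pred m hconn hv
  have hdiv : divOf m (fun u => -(b (dep m hconn q u))) v
      = ∑ w, (b (dep m hconn q w) - b k) * (m v w : ℤ) := by
    rw [divOf_apply]
    congr 1; funext w; rw [← hk]; ring
  rw [hdiv]
  have hsplit : ∑ w, (b (dep m hconn q w) - b k) * (m v w : ℤ)
      = (b (dep m hconn q w₀) - b k) * (m v w₀ : ℤ)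
        + ∑ w ∈ univ.erase w₀, (b (dep m hconn q w) - b k) * (m v w : ℤ) :=
    (Finset.add_sum_erase univ _ (Finset.mem_univ w₀)).symm
  rw [hsplit]
  have hterm1 : (b (dep m hconn q w₀) - b k) * (m v w₀ : ℤ) ≤ -(a k) := by
    have h1 : b (dep m hconn q w₀) ≤ b (k-1) := hbmono (by omega)
    have h2 : b k = b (k-1) + a k := by
      have : k = (k-1) + 1 := by omega
      rw [this, hbsucc]
      congr 1 <;> omega
    have h3 : b (dep m hconn q w₀) - b k ≤ -(a k) := by omega
    have h4 : (1:ℤ) ≤ (m v w₀ : ℤ) := by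
      have : 0 < m v w₀ := by rw [hsymm]; exact hw₀m
      exact_mod_cast this
    nlinarith [ha0 k]
  have hterm2 : ∑ w ∈ univ.erase w₀, (b (dep m hconn q w) - b k) * (m v w : ℤ)
      ≤ a (k+1) * Ee := by
    have hstep : ∀ w ∈ univ.erase w₀, (b (dep m hconn q w) - b k) * (m v w : ℤ)
        ≤ a (k+1) * (m v w : ℤ) := by
      intro w _
      by_cases hmw : m v w = 0
      · simp [hmw]
      · have hadj : dep m hconn q w ≤ k + 1 := by
          rw [hk]
          exact dep_adj m hconn (by omega)
        have h1 : b (dep m hconn q w) ≤ b (k+1) := hbmono hadj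
        have h2 : b (dep m hconn q w) - b k ≤ a (k+1) := by
          rw [hbsucc] at h1; omega
        have hm0 : (0:ℤ) ≤ (m v w : ℤ) := Int.natCast_nonneg _
        exact mul_le_mul_of_nonneg_right h2 hm0
    calc ∑ w ∈ univ.erase w₀, (b (dep m hconn q w) - b k) * (m v w : ℤ)
        ≤ ∑ w ∈ univ.erase w₀, a (k+1) * (m v w : ℤ) := Finset.sum_le_sum hstep
      _ = a (k+1) * ∑ w ∈ univ.erase w₀, (m v w : ℤ) := by rw [Finset.mul_sum]
      _ ≤ a (k+1) * Ee := by
          refine mul_le_mul_of_nonneg_left ?_ (ha0 (k+1))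
          refine le_trans (Finset.sum_le_sum_of_subset_of_nonneg (Finset.subset_univ _)
            fun w _ _ => Int.natCast_nonneg _) (hrow v)
  have := hkey k hk1 hkn
  have := hDlb v
  linarith
end F0

section MaxF
variable {V : Type*} [Fintype V] [DecidableEq V] (m : V → V → ℕ)

lemma f_bound (hsymm : ∀ v w, m v w = m w v) (hconn : Conn m) (q : V) (D : V → ℤ)
    {f : V → ℤ} (hf : ∀ v, v ≠ q → divOf m f v ≤ D v) (hq : f q = 0) :
    ∀ v, f v ≤ (∑ u, max (D u) 0) * (dep m hconn q v : ℤ) := by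
  set Cp : ℤ := ∑ u, max (D u) 0 with hCp
  have hCp0 : 0 ≤ Cp := Finset.sum_nonneg fun u _ => le_max_right _ _
  -- edge lemma
  have hedge : ∀ x y, 0 < m x y → 1 ≤ f x → f x - f y ≤ Cp := by
    intro x y hmxy hfx
    by_cases hxy : f x ≤ f y
    · omega
    push_neg at hxy
    set A : Finset V := univ.filter (fun u => f x ≤ f u) with hA
    have hxA : x ∈ A := by simp [hA]
    have hyA : y ∈ Aᶜ := by simp [hA]; omega
    have hqA : q ∉ A := by simp [hA]; omega
    have h1 : ∑ v ∈ A, divOf m f v ≤ ∑ v ∈ A, D v := by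
      refine Finset.sum_le_sum fun v hvA => hf v ?_
      intro hvq; exact hqA (hvq ▸ hvA)
    have h2 : ∑ v ∈ A, D v ≤ Cp := by
      calc ∑ v ∈ A, D v ≤ ∑ v ∈ A, max (D v) 0 :=
            Finset.sum_le_sum fun v _ => le_max_left _ _
        _ ≤ Cp := Finset.sum_le_sum_of_subset_of_nonneg (Finset.subset_univ _)
            fun v _ _ => le_max_right _ _
    have h3 := cut_sum m hsymm A f
    have htermnn : ∀ v ∈ A, ∀ w ∈ Aᶜ, (0:ℤ) ≤ (f v - f w) * m v w := by
      intro v hv w hw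
      have h4 : f x ≤ f v := by simpa [hA] using hv
      have h5 : ¬ f x ≤ f w := by simpa [hA] using (Finset.mem_compl.1 hw)
      have hm : (0:ℤ) ≤ m v w := Int.natCast_nonneg _
      nlinarith
    have hsingle : (f x - f y) * (m x y : ℤ) ≤ ∑ v ∈ A, ∑ w ∈ Aᶜ, (f v - f w) * m v w := by
      have hinner : (f x - f y) * (m x y : ℤ) ≤ ∑ w ∈ Aᶜ, (f x - f w) * m x w :=
        Finset.single_le_sum (fun w hw => htermnn x hxA w hw) hyA
      refine le_trans hinner ?_
      exact Finset.single_le_sum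
        (fun v hv => Finset.sum_nonneg fun w hw => htermnn v hv w hw) hxA
    have hmul : f x - f y ≤ (f x - f y) * (m x y : ℤ) := by
      have h4 : (1:ℤ) ≤ (m x y : ℤ) := by exact_mod_cast hmxy
      nlinarith
    omega
  -- main, strong induction on dep
  suffices H : ∀ k, ∀ v, dep m hconn q v = k → f v ≤ Cp * k by
    intro v; exact H _ v rfl
  intro k
  induction k using Nat.strong_induction_on with
  | _ k ih =>
    intro v hdep
    by_cases hv : v = q
    · subst hv; rw [hq]; positivity
    by_cases hfv : f v ≤ 0
    · have : (0:ℤ) ≤ Cp * k := by positivity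
      omega
    push_neg at hfv
    obtain ⟨w, hmwv, hdw⟩ := dep_pred m hconn (q := q) hv
    rw [hdep] at hdw
    have hfw := ih _ hdw w rfl
    have hedge' : f v - f w ≤ Cp := hedge v w (by rw [hsymm]; exact hmwv) (by omega)
    have hcast : (dep m hconn q w : ℤ) ≤ (k:ℤ) - 1 := by
      have : dep m hconn q w + 1 ≤ k := hdw
      omega
    have : Cp * (dep m hconn q w : ℤ) ≤ Cp * ((k:ℤ) - 1) := mul_le_mul_of_nonneg_left hcast hCp0
    nlinarith
end MaxF

section ExRed
variable {V : Type*} [Fintype V] [DecidableEq V] (m : V → V → ℕ)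

lemma divOf_indicator (A : Finset V) :
    ∀ v, (v ∈ A → divOf m (fun u => if u ∈ A then 1 else 0) v = ∑ w ∈ Aᶜ, (m v w : ℤ))
      ∧ (v ∉ A → divOf m (fun u => if u ∈ A then 1 else 0) v ≤ 0) := by
  intro v
  constructor
  · intro hv
    rw [divOf_apply, ← Finset.sum_add_sum_compl A]
    have h1 : ∑ w ∈ A, ((if v ∈ A then (1:ℤ) else 0) - (if w ∈ A then 1 else 0)) * m v w = 0 :=
      Finset.sum_eq_zero fun w hw => by simp [hv, hw]
    have h2 : ∑ w ∈ Aᶜ, ((if v ∈ A then (1:ℤ) else 0) - (if w ∈ A then 1 else 0)) * m v w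
        = ∑ w ∈ Aᶜ, (m v w : ℤ) := by
      refine Finset.sum_congr rfl fun w hw => ?_
      have hw' : w ∉ A := Finset.mem_compl.1 hw
      simp [hv, hw']
    rw [h1, h2, zero_add]
  · intro hv
    rw [divOf_apply]
    refine Finset.sum_nonpos fun w _ => ?_
    have hm : (0:ℤ) ≤ m v w := Int.natCast_nonneg _
    by_cases hw : w ∈ A <;> simp [hv, hw] <;> nlinarith

lemma exists_reduced (hsymm : ∀ v w, m v w = m w v) (hconn : Conn m) (q : V) (D : V → ℤ) :
    ∃ D' : V → ℤ, LinEquiv m D D' ∧ Red m q D' := by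
  classical
  set Cp : ℤ := ∑ u, max (D u) 0 with hCp
  have hCp0 : 0 ≤ Cp := Finset.sum_nonneg fun u _ => le_max_right _ _
  set P : ℤ → Prop := fun t => ∃ f : V → ℤ,
    (∀ v, v ≠ q → divOf m f v ≤ D v) ∧ f q = 0 ∧ t = ∑ v, f v with hP
  have hPinh : ∃ t, P t := by
    obtain ⟨f₀, hf₀⟩ := exists_F0 m hsymm hconn q D
    refine ⟨∑ v, (f₀ v - f₀ q), fun v => f₀ v - f₀ q, fun v hv => ?_, by simp, rfl⟩
    have : divOf m (fun u => f₀ u - f₀ q) v = divOf m f₀ v := by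
      rw [divOf_apply, divOf_apply]
      congr 1; funext w; ring
    rw [this]; exact hf₀ v hv
  have hPbdd : ∃ B : ℤ, ∀ t, P t → t ≤ B := by
    refine ⟨(Fintype.card V : ℤ) * (Cp * ((Fintype.card V - 1 : ℕ) : ℤ)), ?_⟩
    rintro t ⟨f, hf, hq, rfl⟩
    have hb := f_bound m hsymm hconn q D hf hq
    calc ∑ v, f v ≤ ∑ v, Cp * ((Fintype.card V - 1 : ℕ) : ℤ) := by
          refine Finset.sum_le_sum fun v _ => le_trans (hb v) ?_
          refine mul_le_mul_of_nonneg_left ?_ hCp0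
          exact_mod_cast dep_le_card m hconn q v
      _ = (Fintype.card V : ℤ) * (Cp * ((Fintype.card V - 1 : ℕ) : ℤ)) := by
          rw [Finset.sum_const, Finset.card_univ]; simp [nsmul_eq_mul]
  obtain ⟨t₀, ⟨f₀, hf₀, hf₀q, ht₀⟩, hmax⟩ := Int.exists_greatest_of_bdd hPbdd hPinh
  refine ⟨D - divOf m f₀, ⟨f₀, by abel⟩, ⟨fun v hv => by
    simp only [Pi.sub_apply]; linarith [hf₀ v hv], ?_⟩⟩
  intro A hA hqA
  by_contra hc
  push_neg at hc
  set χ : V → ℤ := fun u => if u ∈ A then 1 else 0 with hχ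
  set f' : V → ℤ := f₀ + χ with hf'
  have hP' : P (∑ v, f' v) := by
    refine ⟨f', fun v hv => ?_, by simp [hf', hχ, hqA, hf₀q], rfl⟩
    rw [hf', divOf_add]
    by_cases hvA : v ∈ A
    · have h1 := (divOf_indicator m A v).1 hvA
      have h2 := hc v hvA
      simp only [Pi.add_apply, hχ]
      simp only [Pi.sub_apply] at h2
      rw [h1]
      linarith
    · have h1 := (divOf_indicator m A v).2 hvA
      simp only [Pi.add_apply, hχ]
      linarith [hf₀ v hv]
  have hsum : ∑ v, f' v = (∑ v, f₀ v) + A.card := by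
    simp only [hf', Pi.add_apply, Finset.sum_add_distrib]
    congr 1
    rw [hχ]
    rw [Finset.sum_ite_mem]
    simp [Finset.univ_inter]
  have hcard : 1 ≤ A.card := Finset.card_pos.2 hA
  have := hmax _ hP'
  rw [hsum, ← ht₀] at this
  have : (A.card : ℤ) ≤ 0 := by omega
  omega
end ExRed

section Nu
variable {V : Type*} [Fintype V] [DecidableEq V] (m : V → V → ℕ)

/-- canonical divisor -/
def KDiv (v : V) : ℤ := (∑ w, (m v w : ℤ)) - 2

/-- the divisor attached to an ordering (injective labelling) -/
def nuDiv (ι : V → ℤ) (v : V) : ℤ :=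
  (∑ w ∈ univ.filter (fun w => ι w < ι v), (m v w : ℤ)) - 1

lemma nu_add_rev (hloop : ∀ v, m v v = 0) {ι : V → ℤ} (hι : Function.Injective ι) (v : V) :
    nuDiv m ι v + nuDiv m (fun u => -ι u) v = KDiv m v := by
  have hdisj : Disjoint (univ.filter (fun w => ι w < ι v))
      (univ.filter (fun w : V => -ι w < -ι v)) := by
    rw [Finset.disjoint_filter]
    intro w _ h1 h2
    omega
  have hunion : (univ.filter (fun w => ι w < ι v)) ∪ (univ.filter (fun w : V => -ι w < -ι v))
      = univ.erase v := by
    ext w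
    simp only [Finset.mem_union, Finset.mem_filter, Finset.mem_univ, true_and,
      Finset.mem_erase, and_true]
    constructor
    · rintro (h | h) rfl <;> omega
    · intro hw
      have : ι w ≠ ι v := fun hh => hw (hι hh)
      omega
  have hsum : (∑ w ∈ univ.filter (fun w => ι w < ι v), (m v w : ℤ))
      + ∑ w ∈ univ.filter (fun w : V => -ι w < -ι v), (m v w : ℤ)
      = ∑ w ∈ univ.erase v, (m v w : ℤ) := by
    rw [← Finset.sum_union hdisj, hunion]
  have herase : ∑ w ∈ univ.erase v, (m v w : ℤ) = ∑ w, (m v w : ℤ) := by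
    rw [Finset.sum_erase]
    simp [hloop v]
  simp only [nuDiv, KDiv]
  omega

lemma deg_nuDiv (hsymm : ∀ v w, m v w = m w v) (hloop : ∀ v, m v v = 0)
    {ι : V → ℤ} (hι : Function.Injective ι) :
    2 * (degOf (nuDiv m ι) + Fintype.card V) = ∑ v, ∑ w, (m v w : ℤ) := by
  have key : ∀ v, nuDiv m ι v + nuDiv m (fun u => -ι u) v = KDiv m v :=
    nu_add_rev m hloop hι
  have hrev : degOf (nuDiv m ι) = degOf (nuDiv m (fun u => -ι u)) := by
    simp only [degOf, nuDiv]
    rw [Finset.sum_sub_distrib, Finset.sum_sub_distrib]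
    congr 1
    -- double counting by swapping
    have h1 : ∀ (c : V → V → ℤ), ∑ v, ∑ w ∈ univ.filter (fun w => ι w < ι v), c v w
        = ∑ v, ∑ w, if ι w < ι v then c v w else 0 := by
      intro c
      congr 1; funext v
      rw [Finset.sum_filter]
    have h2 : ∀ (c : V → V → ℤ), ∑ v, ∑ w ∈ univ.filter (fun w : V => -ι w < -ι v), c v w
        = ∑ v, ∑ w, if ι v < ι w then c v w else 0 := by
      intro c
      congr 1; funext v
      rw [Finset.sum_filter]
      congr 1; funext w
      by_cases h : ι v < ι w
      · rw [if_pos h, if_pos (by omega)]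
      · rw [if_neg h, if_neg (by omega)]
    rw [h1, h2, Finset.sum_comm]
    congr 1; funext v
    congr 1; funext w
    rw [hsymm]
  have hdeg2 : degOf (nuDiv m ι) + degOf (nuDiv m (fun u => -ι u)) = degOf (KDiv m) := by
    simp only [degOf, ← Finset.sum_add_distrib]
    exact Finset.sum_congr rfl fun v _ => key v
  have hdegK : degOf (KDiv m) = (∑ v, ∑ w, (m v w : ℤ)) - 2 * Fintype.card V := by
    simp only [degOf, KDiv, Finset.sum_sub_distrib, Finset.sum_const, Finset.card_univ]
    push_cast
    ring
  rw [← hrev] at hdeg2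
  omega

lemma nu_not_special (hsymm : ∀ v w, m v w = m w v) (q : V) {ι : V → ℤ}
    (hι : Function.Injective ι) {E : V → ℤ}
    (hlin : LinEquiv m (nuDiv m ι) E) (hE : ∀ v, 0 ≤ E v) : False := by
  obtain ⟨f, hf⟩ := hlin
  have hEv : ∀ v, E v = nuDiv m ι v - divOf m f v := by
    intro v
    have := congrFun hf v
    simp only [Pi.sub_apply] at this
    omega
  obtain ⟨z, -, hz⟩ := Finset.exists_max_image univ f ⟨q, Finset.mem_univ q⟩
  set B : Finset V := univ.filter (fun v => f v = f z) with hB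
  obtain ⟨v, hvB, hv⟩ := Finset.exists_min_image B ι ⟨z, by simp [hB]⟩
  have hfv : f v = f z := by simpa [hB] using hvB
  have hlow : ∀ w, ι w < ι v → f v - f w ≥ 1 := by
    intro w hw
    have hwB : w ∉ B := fun hwB => by have := hv w hwB; omega
    have h1 : f w ≠ f z := by simpa [hB] using hwB
    have h2 := hz w (Finset.mem_univ w)
    omega
  have hdivlb : (nuDiv m ι v) + 1 ≤ divOf m f v := by
    rw [divOf_apply, ← Finset.sum_add_sum_compl (univ.filter (fun w => ι w < ι v))]
    have h1 : ∑ w ∈ univ.filter (fun w => ι w < ι v), (m v w : ℤ)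
        ≤ ∑ w ∈ univ.filter (fun w => ι w < ι v), (f v - f w) * m v w := by
      refine Finset.sum_le_sum fun w hw => ?_
      have hw' : ι w < ι v := (Finset.mem_filter.1 hw).2
      have := hlow w hw'
      have hm : (0:ℤ) ≤ m v w := Int.natCast_nonneg _
      nlinarith
    have h2 : 0 ≤ ∑ w ∈ (univ.filter (fun w => ι w < ι v))ᶜ, (f v - f w) * m v w := by
      refine Finset.sum_nonneg fun w _ => ?_
      have := hz w (Finset.mem_univ w)
      have hm : (0:ℤ) ≤ m v w := Int.natCast_nonneg _
      nlinarith
    simp only [nuDiv]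
    omega
  have := hE v
  rw [hEv v] at this
  simp only [nuDiv] at this hdivlb
  omega
end Nu

section Dhar
variable {V : Type*} [Fintype V] [DecidableEq V] (m : V → V → ℕ)

lemma burn (q : V) (D : V → ℤ) (hred : Red m q D) (A : Finset V) :
    q ∉ A → ∃ ι : V → ℤ, Function.Injective ι ∧
      (∀ u ∉ A, ∀ w ∈ A, ι u < ι w) ∧
      (∀ v ∈ A, D v < ∑ w ∈ univ.filter (fun w => ι w < ι v), (m v w : ℤ)) := by
  induction A using Finset.strongInductionOn with
  | _ A ih =>
    intro hqA
    rcases A.eq_empty_or_nonempty with rfl | hA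
    · refine ⟨fun v => ((Fintype.equivFin V v : ℕ) : ℤ), ?_, by simp, by simp⟩
      intro a b h
      have h' : ((Fintype.equivFin V a : ℕ) : ℤ) = ((Fintype.equivFin V b : ℕ) : ℤ) := h
      exact (Fintype.equivFin V).injective (Fin.val_injective (by exact_mod_cast h'))
    · obtain ⟨v, hvA, hv⟩ := hred.2 A hA hqA
      have hss : A.erase v ⊂ A := Finset.erase_ssubset hvA
      obtain ⟨ι', hinj', hsep', hburn'⟩ := ih (A.erase v) hss
        (fun h => hqA (Finset.mem_of_mem_erase h))
      set T : ℤ := 1 + ∑ u, |ι' u| with hT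
      have habs : ∀ u, |ι' u| < T := by
        intro u
        have h1 : |ι' u| ≤ ∑ u, |ι' u| :=
          Finset.single_le_sum (fun u _ => abs_nonneg (ι' u)) (Finset.mem_univ u)
        omega
      have hbnd : ∀ u, -T < ι' u ∧ ι' u < T := fun u => abs_lt.1 (habs u)
      set ι : V → ℤ := fun u => if u ∈ A.erase v then ι' u + 2*T else if u = v then T else ι' u
        with hι
      have hval : ∀ u, u ∉ A.erase v → u ≠ v → ι u = ι' u := by
        intro u h1 h2
        simp only [hι]
        rw [if_neg h1, if_neg h2]
      have hio : ∀ u, u ∉ A → ι u = ι' u := by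
        intro u hu
        have h1 : u ∉ A.erase v := fun h => hu (Finset.mem_of_mem_erase h)
        have h2 : u ≠ v := fun h => hu (h ▸ hvA)
        exact hval u h1 h2
      have hiv : ι v = T := by
        simp only [hι]
        rw [if_neg (Finset.notMem_erase v A)]; simp
      have hie : ∀ u ∈ A.erase v, ι u = ι' u + 2*T := by
        intro u hu
        simp only [hι]
        rw [if_pos hu]
      have hTpos : 0 < T := by
        have : 0 ≤ ∑ u, |ι' u| := Finset.sum_nonneg fun u _ => abs_nonneg _
        omega
      refine ⟨ι, ?_, ?_, ?_⟩
      · -- injective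
        intro a b hab
        by_cases haA : a ∈ A.erase v <;> by_cases hbA : b ∈ A.erase v
        · rw [hie a haA, hie b hbA] at hab
          exact hinj' (by omega)
        · exfalso
          rw [hie a haA] at hab
          by_cases hbv : b = v
          · rw [hbv, hiv] at hab
            have := (hbnd a).1
            omega
          · have : ι b = ι' b := hval b hbA hbv
            rw [this] at hab
            have := (hbnd a).1; have := (hbnd b).2
            omega
        · exfalso
          rw [hie b hbA] at hab
          by_cases hav : a = v
          · rw [hav, hiv] at hab
            have := (hbnd b).1
            omega
          · have : ι a = ι' a := hval a haA hav
            rw [this] at hab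
            have := (hbnd b).1; have := (hbnd a).2
            omega
        · by_cases hav : a = v <;> by_cases hbv : b = v
          · rw [hav, hbv]
          · exfalso
            rw [hav, hiv] at hab
            have : ι b = ι' b := hval b hbA hbv
            rw [this] at hab
            have := (hbnd b).2
            omega
          · exfalso
            rw [hbv, hiv] at hab
            have : ι a = ι' a := hval a haA hav
            rw [this] at hab
            have := (hbnd a).2
            omega
          · have h1 : ι a = ι' a := hval a haA hav
            have h2 : ι b = ι' b := hval b hbA hbv
            rw [h1, h2] at hab
            exact hinj' hab
      · -- separation
        intro u hu w hw
        have h1 : ι u = ι' u := hio u hu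
        have h2 : T ≤ ι w := by
          by_cases hwv : w = v
          · rw [hwv, hiv]
          · have hwA' : w ∈ A.erase v := Finset.mem_erase.2 ⟨hwv, hw⟩
            rw [hie w hwA']
            have := (hbnd w).1
            omega
        have := (hbnd u).2
        omega
      · -- burning inequality
        intro u hu
        by_cases huv : u = v
        · subst huv
          have hfilter : univ.filter (fun w => ι w < ι u) = Aᶜ := by
            ext w
            simp only [Finset.mem_filter, Finset.mem_univ, true_and, Finset.mem_compl]
            rw [hiv]
            constructor
            · intro hlt hwA
              by_cases hwv : w = u
              · rw [hwv, hiv] at hlt; omega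
              · rw [hie w (Finset.mem_erase.2 ⟨hwv, hwA⟩)] at hlt
                have := (hbnd w).1
                omega
            · intro hwA
              rw [hio w hwA]
              exact (hbnd w).2
          rw [hfilter]
          exact hv
        · have huA' : u ∈ A.erase v := Finset.mem_erase.2 ⟨huv, hu⟩
          have hD := hburn' u huA'
          refine lt_of_lt_of_le hD ?_
          refine Finset.sum_le_sum_of_subset_of_nonneg ?_ fun w _ _ => Int.natCast_nonneg _
          intro w hwf
          have hlt : ι' w < ι' u := (Finset.mem_filter.1 hwf).2
          simp only [Finset.mem_filter, Finset.mem_univ, true_and]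
          rw [hie u huA']
          by_cases hwA : w ∈ A.erase v
          · rw [hie w hwA]; omega
          · by_cases hwv : w = v
            · rw [hwv, hiv]
              have := (hbnd u).1
              omega
            · have : ι w = ι' w := hval w hwA hwv
              rw [this]
              have := (hbnd u).1; have := (hbnd w).2
              omega

lemma dhar (q : V) {D : V → ℤ} (hred : Red m q D) (hq : D q < 0) :
    ∃ ι : V → ℤ, Function.Injective ι ∧ ∀ v, D v ≤ nuDiv m ι v := by
  obtain ⟨ι, hinj, -, hburn⟩ := burn m q D hred (univ.erase q) (by simp)
  refine ⟨ι, hinj, fun v => ?_⟩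
  by_cases hvq : v = q
  · subst hvq
    have h1 : (0:ℤ) ≤ ∑ w ∈ univ.filter (fun w => ι w < ι v), (m v w : ℤ) :=
      Finset.sum_nonneg fun w _ => Int.natCast_nonneg _
    simp only [nuDiv]
    omega
  · have := hburn v (Finset.mem_erase.2 ⟨hvq, Finset.mem_univ v⟩)
    simp only [nuDiv]
    omega
end Dhar

section RR
variable {V : Type*} [Fintype V] [DecidableEq V] (m : V → V → ℕ)

lemma RRi (hsymm : ∀ v w, m v w = m w v) (hloop : ∀ v, m v v = 0) (hconn : Conn m)
    (q : V) (g : ℤ) (hg : 2 * (g + Fintype.card V - 1) = ∑ v, ∑ w, (m v w : ℤ))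
    (d : V → ℤ) :
    degOf d - g + 1 + bnRank m (KDiv m - d) ≤ bnRank m d := by
  set r' := bnRank m (KDiv m - d) with hr'
  by_contra hcon
  push_neg at hcon
  set s : ℤ := degOf d - g + 1 + r' with hs
  have hrlow := neg_one_le_bnRank m hsymm q d
  have hs0 : 0 ≤ s := by omega
  have hnot : ¬ rankGE m d s.toNat := by
    intro h
    have := le_bnRank_of_rankGE m hsymm q h
    rw [Int.toNat_of_nonneg hs0] at this
    omega
  unfold rankGE at hnot
  push_neg at hnot
  obtain ⟨e, heff, hdeg, hdom⟩ := hnot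
  rw [Int.toNat_of_nonneg hs0] at hdeg
  have hne : ¬ ∃ X : V → ℤ, LinEquiv m (d - e) X ∧ ∀ v, 0 ≤ X v := by
    rintro ⟨X, ⟨f, hf⟩, hXe⟩
    obtain ⟨v, hv⟩ := hdom (X + e) ⟨f, by rw [← hf]; abel⟩
    have := hXe v
    simp only [Pi.add_apply] at hv
    omega
  obtain ⟨D₀, hD₀equiv, hD₀red⟩ := exists_reduced m hsymm hconn q (d - e)
  have hD₀q : D₀ q < 0 := by
    by_contra h
    push_neg at h
    refine hne ⟨D₀, hD₀equiv, fun v => ?_⟩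
    by_cases hvq : v = q
    · subst hvq; exact h
    · exact hD₀red.1 v hvq
  obtain ⟨ι, hinj, hle⟩ := dhar m q hD₀red hD₀q
  set ν : V → ℤ := nuDiv m ι with hν
  set e'' : V → ℤ := ν - D₀ with he''
  have he''eff : ∀ v, 0 ≤ e'' v := fun v => by
    simp only [he'', Pi.sub_apply]
    linarith [hle v]
  have hdegν : degOf ν = g - 1 := by
    have := deg_nuDiv m hsymm hloop hinj
    rw [← hν] at this
    omega
  have hdegD₀ : degOf D₀ = degOf d - s := by
    have h1 := deg_eq_of_linEquiv m hsymm hD₀equiv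
    have h2 : degOf (d - e) = degOf d - degOf e := by
      simp [degOf, Finset.sum_sub_distrib]
    omega
  have hdege'' : degOf e'' = r' := by
    have : degOf e'' = degOf ν - degOf D₀ := by
      simp [he'', degOf, Finset.sum_sub_distrib]
    omega
  have hr'0 : 0 ≤ r' := by
    have := deg_nonneg_of_eff he''eff
    omega
  have hrk : rankGE m (KDiv m - d) r'.toNat :=
    rankGE_of_le_bnRank m hsymm q (by rw [Int.toNat_of_nonneg hr'0])
  set νb : V → ℤ := nuDiv m (fun u => -ι u) with hνb
  have hK : (KDiv m : V → ℤ) = ν + νb := by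
    funext v
    exact (nu_add_rev m hloop hinj v).symm
  have hlin2 : LinEquiv m (KDiv m - d) ((νb - e) + e'') := by
    obtain ⟨f, hf⟩ := hD₀equiv
    refine ⟨-f, ?_⟩
    rw [divOf_neg, ← hf, hK, he'']
    abel
  have hrk2 : rankGE m ((νb - e) + e'') r'.toNat := rankGE_congr m hlin2 hrk
  obtain ⟨X', hX'equiv, hX'eff⟩ := rankGE_extract m he''eff
    (by rw [hdege'', Int.toNat_of_nonneg hr'0]) hrk2
  have hinjneg : Function.Injective (fun u => -ι u) := fun a b h => hinj (by
    have : -ι a = -ι b := h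
    omega)
  refine nu_not_special m hsymm q hinjneg (E := X' + e) ?_ fun v => ?_
  · obtain ⟨f, hf⟩ := hX'equiv
    refine ⟨f, ?_⟩
    rw [← hf, hνb]
    abel
  · simp only [Pi.add_apply]
    have := hX'eff v
    have := heff v
    omega
end RR

/-- Clifford's theorem for graphs: for a loopless weightless connected graph of
genus `g` and a divisor `d` with `0 ≤ deg d ≤ 2g − 2` and `r_G(d) ≥ 0`, one has
`r_G(d) ≤ (deg d)/2`. -/
theorem clifford_for_graphs {V : Type*} [Fintype V] (m : V → V → ℕ)
    (hsymm : ∀ v w, m v w = m w v) (hloop : ∀ v, m v v = 0) (hconn : Conn m)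
    (g : ℤ) (hg : 2 * (g + Fintype.card V - 1) = ∑ v, ∑ w, (m v w : ℤ))
    (d : V → ℤ) (h0 : 0 ≤ degOf d) (h2 : degOf d ≤ 2 * g - 2)
    (hr : 0 ≤ bnRank m d) :
    2 * bnRank m d ≤ degOf d := by
  classical
  by_cases hV : Nonempty V
  · obtain ⟨q⟩ := hV
    set K : V → ℤ := KDiv m with hK
    set r : ℤ := bnRank m d with hrdef
    set r' : ℤ := bnRank m (K - d) with hr'def
    have hdegK : degOf K = 2 * g - 2 := by
      simp only [hK, degOf, KDiv, Finset.sum_sub_distrib, Finset.sum_const, Finset.card_univ]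
      have h1 : ∑ v : V, ∑ w : V, (m v w : ℤ) = 2 * (g + Fintype.card V - 1) := hg.symm
      rw [h1]
      push_cast
      ring
    have hdegKd : degOf (K - d) = (2 * g - 2) - degOf d := by
      have : degOf (K - d) = degOf K - degOf d := by
        simp [degOf, Finset.sum_sub_distrib]
      omega
    have hKK : K - (K - d) = d := by abel
    have hRR1 := RRi m hsymm hloop hconn q g hg (K - d)
    rw [hKK, hdegKd] at hRR1
    -- hRR1 : (2g-2-deg d) - g + 1 + bnRank m d ≤ bnRank m (K - d)
    by_cases hr' : 0 ≤ r'
    · have h1 : rankGE m d r.toNat :=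
        rankGE_of_le_bnRank m hsymm q (by rw [Int.toNat_of_nonneg hr])
      have h2 : rankGE m (K - d) r'.toNat :=
        rankGE_of_le_bnRank m hsymm q (by rw [Int.toNat_of_nonneg hr'])
      have h3 : rankGE m (d + (K - d)) (r.toNat + r'.toNat) := rankGE_subadd m h1 h2
      have hdK : d + (K - d) = K := by abel
      rw [hdK] at h3
      have h4 := le_bnRank_of_rankGE m hsymm q h3
      have h4' : r + r' ≤ bnRank m K := by
        push_cast at h4
        rw [Int.toNat_of_nonneg hr, Int.toNat_of_nonneg hr'] at h4
        exact h4
      have hRR0 := RRi m hsymm hloop hconn q g hg (0 : V → ℤ)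
      have hdeg0 : degOf (0 : V → ℤ) = 0 := by simp [degOf]
      have hsub0 : K - (0 : V → ℤ) = K := by abel
      rw [hdeg0, hsub0] at hRR0
      have h5 : bnRank m (0 : V → ℤ) ≤ 0 := by
        have := bnRank_le_deg m hsymm q (0 : V → ℤ) (le_of_eq hdeg0.symm)
        omega
      -- bnRank m K ≤ g - 1
      have h6 : bnRank m K ≤ g - 1 := by omega
      omega
    · push_neg at hr'
      omega
  · have hIE : IsEmpty V := not_nonempty_iff.1 hV
    have hall : ∀ k : ℕ, rankGE m d k := by
      intro k e he hdeg
      exact ⟨d, linEquiv_refl m d, fun v => isEmptyElim v⟩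
    have hnb : ¬ BddAbove ({-1} ∪ {k : ℤ | 0 ≤ k ∧ rankGE m d k.toNat}) := by
      rintro ⟨B, hB⟩
      have h1 : (max B 0 + 1) ∈ ({-1} ∪ {k : ℤ | 0 ≤ k ∧ rankGE m d k.toNat}) :=
        Or.inr ⟨by have := le_max_right B 0; omega, hall _⟩
      have h2 := hB h1
      have := le_max_left B 0
      omega
    have hz : bnRank m d = 0 := Int.csSup_of_not_bddAbove hnb
    have hdeg0 : degOf d = 0 := by
      simp [degOf, Finset.univ_eq_empty]
    omega
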